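/- Let X be a real infinite-dimensional Banach space with a Schauder basis (x_n)_{n=1}^∞ with basis constant K. Then bc₃((x_n)) ≤ 2K²·wk_X(B_X). -/

import Mathlib

open Filter Metric NormedSpace Set Topology

noncomputable section

variable {E : Type*} [NormedAddCommGroup E] [NormedSpace ℝ E]

/-- `f` is the sequence of coordinate functionals of the Schauder basis `x`:
every vector has an expansion along `x`, and such expansions are unique. -/
structure IsSchauderBasis (x : ℕ → E) (f : ℕ → E →L[ℝ] ℝ) : Prop where
  expand : ∀ v : E,
    Tendsto (fun n => ∑ i ∈ Finset.range n, f i v • x i) atTop (𝓝 v)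
  unique : ∀ (a : ℕ → ℝ) (v : E),
    Tendsto (fun n => ∑ i ∈ Finset.range n, a i • x i) atTop (𝓝 v) → ∀ i, a i = f i v

/-- the `n`-th basis projection `P_n`. -/
def basisProj (x : ℕ → E) (f : ℕ → E →L[ℝ] ℝ) (n : ℕ) : E →L[ℝ] E :=
  ∑ i ∈ Finset.range n, (f i).smulRight (x i)

/-- closed linear span of `{y i : i ≥ n}`. -/
def tailSpan (y : ℕ → E) (n : ℕ) : Submodule ℝ E :=
  (Submodule.span ℝ (y '' {i | n ≤ i})).topologicalClosure

/-- `‖g‖_n` : the norm of the restriction of `g` to the closed span of the tail of `y`. -/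
def tailNorm (y : ℕ → E) (g : E →L[ℝ] ℝ) (n : ℕ) : ℝ :=
  ‖g.comp (tailSpan y n).subtypeL‖

/-- the quantity `sh` measuring how far a basic sequence is from being shrinking. -/
def sh (y : ℕ → E) : ℝ :=
  sSup ((fun g : E →L[ℝ] ℝ => limsup (tailNorm y g) atTop) '' {g | ‖g‖ ≤ 1})

/-- non-symmetrised Hausdorff distance `d̂(A,B)`. -/
def hdist (A B : Set E) : ℝ := sSup ((fun a => infDist a B) '' A)

/-- ordinary distance between two sets. -/
def setDist (A B : Set E) : ℝ := sInf {d : ℝ | ∃ a ∈ A, ∃ b ∈ B, d = dist a b}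

/-- `ca` measures how far a sequence is from being norm-Cauchy. -/
def ca (z : ℕ → E) : ℝ :=
  ⨅ n : ℕ, sSup {d : ℝ | ∃ k, n ≤ k ∧ ∃ l, n ≤ l ∧ d = ‖z k - z l‖}

/-- measure of non-separability. -/
def sep (A : Set E) : ℝ :=
  sInf {ε : ℝ | 0 < ε ∧ ∃ C : Set E, C.Countable ∧ ∀ a ∈ A, ∃ c ∈ C, ‖a - c‖ ≤ ε}

/-- `V`: the closed linear span of the coordinate functionals. -/
def dualSpan (g : ℕ → E →L[ℝ] ℝ) : Submodule ℝ (StrongDual ℝ E) :=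
  (Submodule.span ℝ (Set.range g)).topologicalClosure

lemma mem_dualSpan (g : ℕ → E →L[ℝ] ℝ) (i : ℕ) : g i ∈ dualSpan g :=
  Submodule.le_topologicalClosure _ (Submodule.subset_span ⟨i, rfl⟩)

/-- the quantity `bc₁` measuring non-bounded-completeness. -/
def bc1 (y : ℕ → E) : ℝ :=
  sSup {c : ℝ | ∃ a : ℕ → ℝ,
    (∀ n, ‖∑ i ∈ Finset.range n, a i • y i‖ ≤ 1) ∧
    c = ca (fun n => ∑ i ∈ Finset.range n, a i • y i)}

/-- the quantity `bc₂`. -/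
def bc2 (y : ℕ → E) (g : ℕ → E →L[ℝ] ℝ) : ℝ :=
  sSup {c : ℝ | ∃ φ : ↥(dualSpan g) →L[ℝ] ℝ, @norm _ (@ContinuousLinearMap.hasOpNorm ℝ ℝ ↥(dualSpan g) ℝ _ _ _ _ _ _ _) φ ≤ 1 ∧
    c = ca (fun n => ∑ i ∈ Finset.range n, φ ⟨g i, mem_dualSpan g i⟩ • y i)}

/-- the quantity `bc₃`. -/
def bc3 (y : ℕ → E) (g : ℕ → E →L[ℝ] ℝ) : ℝ :=
  sSup {c : ℝ | ∃ Φ : StrongDual ℝ (StrongDual ℝ E), ‖Φ‖ ≤ 1 ∧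
    c = ca (fun n => ∑ i ∈ Finset.range n, Φ (g i) • y i)}

/-- `α_Y(X)`: measures how well `Y` embeds isomorphically into `X`. -/
def alpha (Y X : Type*) [NormedAddCommGroup Y] [NormedSpace ℝ Y]
    [NormedAddCommGroup X] [NormedSpace ℝ X] : ℝ :=
  sSup {c : ℝ | ∃ T : Y →L[ℝ] X, ‖T‖ ≤ 1 ∧ ∀ y : Y, c * ‖y‖ ≤ ‖T y‖}

/-- `β_Y(X)`: measures how well `Y` embeds complementably into `X`. -/
def beta (Y X : Type*) [NormedAddCommGroup Y] [NormedSpace ℝ Y]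
    [NormedAddCommGroup X] [NormedSpace ℝ X] : ℝ :=
  sSup {c : ℝ | ∃ (A : X →L[ℝ] Y) (B : Y →L[ℝ] X),
    A.comp B = ContinuousLinearMap.id ℝ Y ∧ c * (‖A‖ * ‖B‖) ≤ 1}

/-- weak-star closure of a subset of the bidual. -/
def wstarClosure {X : Type*} [NormedAddCommGroup X] [NormedSpace ℝ X]
    (S : Set (StrongDual ℝ (StrongDual ℝ X))) : Set (StrongDual ℝ (StrongDual ℝ X)) :=
  {z | StrongDual.toWeakDual z ∈ closure (StrongDual.toWeakDual '' S)}

/-- the measure of weak non-compactness `wk_X(A)`. -/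
def wk (X : Type*) [NormedAddCommGroup X] [NormedSpace ℝ X] (A : Set X) : ℝ :=
  hdist (wstarClosure ((inclusionInDoubleDual ℝ X) '' A))
    (Set.range (inclusionInDoubleDual ℝ X))

/-- weak-star cluster points in the bidual of a sequence in `X`. -/
def wclust {X : Type*} [NormedAddCommGroup X] [NormedSpace ℝ X] (u : ℕ → X) :
    Set (StrongDual ℝ (StrongDual ℝ X)) :=
  {z | MapClusterPt (StrongDual.toWeakDual z) atTop
      (fun n => StrongDual.toWeakDual (inclusionInDoubleDual ℝ X (u n)))}

/-- the measure of weak non-compactness `wck_X(A)`. -/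
def wck (X : Type*) [NormedAddCommGroup X] [NormedSpace ℝ X] (A : Set X) : ℝ :=
  sSup {c : ℝ | ∃ u : ℕ → X, (∀ n, u n ∈ A) ∧
    c = setDist (wclust u) (Set.range (inclusionInDoubleDual ℝ X))}



/-- Every continuous linear functional on a weak-star dual is evaluation at a point. -/
lemma weakdual_dual_char {E : Type*} [NormedAddCommGroup E] [NormedSpace ℝ E]
    (F : WeakDual ℝ E →L[ℝ] ℝ) :
    ∃ h : E, ∀ z : WeakDual ℝ E, F z = z h := by
  have hmem : F ⁻¹' (Metric.ball (0:ℝ) 1) ∈ 𝓝 (0 : WeakDual ℝ E) := by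
    have := F.continuous.continuousAt (x := 0)
    apply this.preimage_mem_nhds
    rw [map_zero]
    exact Metric.ball_mem_nhds _ one_pos
  replace hmem := (LinearMap.hasBasis_weakBilin (topDualPairing ℝ E)).mem_iff.1 hmem
  obtain ⟨U, hU, hUsub⟩ := hmem
  obtain ⟨s, r, hr, rfl⟩ := ((topDualPairing ℝ E).toSeminormFamily.basisSets_iff).1 hU
  have key : ∀ z : WeakDual ℝ E, (∀ i ∈ s, z i = 0) → F z = 0 := by
    intro z hz
    by_contra h0
    have hmem2 : (F z)⁻¹ • z ∈ Seminorm.ball (s.sup (topDualPairing ℝ E).toSeminormFamily) 0 r := by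
      refine (Seminorm.mem_ball_zero _).2 ?_
      apply Seminorm.finset_sup_apply_lt hr
      intro i hi
      show ‖(F z)⁻¹ * z i‖ < r
      rw [hz i hi, mul_zero, norm_zero]
      exact hr
    have h1 : (F z)⁻¹ • z ∈ F ⁻¹' Metric.ball (0:ℝ) 1 := hUsub hmem2
    simp only [mem_preimage, map_smul, smul_eq_mul, inv_mul_cancel₀ h0,
      Metric.mem_ball, dist_zero_right, norm_one] at h1
    exact absurd h1 (lt_irrefl 1)
  let L : {i // i ∈ s} → WeakDual ℝ E →ₗ[ℝ] ℝ := fun i =>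
    { toFun := fun z => z i.1
      map_add' := fun a b => rfl
      map_smul' := fun c a => rfl }
  have hker : ⨅ i : {i // i ∈ s}, LinearMap.ker (L i) ≤ LinearMap.ker (F : WeakDual ℝ E →ₗ[ℝ] ℝ) := by
    intro z hz
    rw [Submodule.mem_iInf] at hz
    rw [LinearMap.mem_ker]
    exact key z fun i hi => hz ⟨i, hi⟩
  obtain ⟨c, hc⟩ := (Submodule.mem_span_range_iff_exists_fun ℝ).1 (mem_span_of_iInf_ker_le_ker hker)
  refine ⟨∑ i : {i // i ∈ s}, c i • (i.1 : E), fun z => ?_⟩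
  have h2 : (∑ i : {i // i ∈ s}, c i • L i) z = F z := by rw [hc]; rfl
  rw [← h2]
  simp only [LinearMap.sum_apply, LinearMap.smul_apply, smul_eq_mul]
  rw [map_sum]
  simp [L]
  rfl

lemma norm_le_one_of_mem_wstar {X : Type*} [NormedAddCommGroup X] [NormedSpace ℝ X]
    (z : StrongDual ℝ (StrongDual ℝ X))
    (hz : z ∈ wstarClosure ((inclusionInDoubleDual ℝ X) '' Metric.closedBall 0 1)) :
    ‖z‖ ≤ 1 := by
  apply ContinuousLinearMap.opNorm_le_bound _ zero_le_one
  intro h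
  rw [one_mul]
  have hC : IsClosed {w : WeakDual ℝ (StrongDual ℝ X) | ‖w h‖ ≤ ‖h‖} :=
    isClosed_le ((WeakBilin.eval_continuous _ h).norm) continuous_const
  have hsub : StrongDual.toWeakDual '' ((inclusionInDoubleDual ℝ X) '' Metric.closedBall 0 1) ⊆
      {w : WeakDual ℝ (StrongDual ℝ X) | ‖w h‖ ≤ ‖h‖} := by
    rintro _ ⟨_, ⟨v, hv, rfl⟩, rfl⟩
    simp only [mem_setOf_eq]
    have heq : (StrongDual.toWeakDual (inclusionInDoubleDual ℝ X v)) h = h v := rfl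
    rw [heq]
    calc ‖h v‖ ≤ ‖h‖ * ‖v‖ := h.le_opNorm v
    _ ≤ ‖h‖ * 1 := by
        have hv1 : ‖v‖ ≤ 1 := by simpa [Metric.mem_closedBall, dist_zero_right] using hv
        exact mul_le_mul_of_nonneg_left hv1 (norm_nonneg h)
    _ = ‖h‖ := mul_one _
  exact closure_minimal hsub hC hz

/-- Goldstine's theorem: the unit ball of a Banach space is weak-star dense
in the unit ball of its bidual. -/
lemma goldstine {X : Type*} [NormedAddCommGroup X] [NormedSpace ℝ X]
    (Φ : StrongDual ℝ (StrongDual ℝ X)) (hΦ : ‖Φ‖ ≤ 1) :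
    Φ ∈ wstarClosure ((inclusionInDoubleDual ℝ X) '' Metric.closedBall 0 1) := by
  by_contra hc
  set S := StrongDual.toWeakDual '' ((inclusionInDoubleDual ℝ X) '' Metric.closedBall (0:X) 1) with hS
  have hconv : Convex ℝ (closure S) := by
    apply Convex.closure
    have h1 : Convex ℝ ((inclusionInDoubleDual ℝ X) '' Metric.closedBall (0:X) 1) :=
      (convex_closedBall (0:X) 1).linear_image (inclusionInDoubleDual ℝ X).toLinearMap
    exact h1.linear_image (StrongDual.toWeakDual : StrongDual ℝ (StrongDual ℝ X) ≃ₗ[ℝ] _).toLinearMap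
  haveI : LocallyConvexSpace ℝ (WeakDual ℝ (StrongDual ℝ X)) :=
    by exact WeakBilin.locallyConvexSpace (E := StrongDual ℝ (StrongDual ℝ X)) (B := topDualPairing ℝ (StrongDual ℝ X))
  obtain ⟨F, u, hFu, hΦu⟩ := geometric_hahn_banach_closed_point hconv isClosed_closure hc
  obtain ⟨h, hF⟩ := weakdual_dual_char F
  have hvu : ∀ v : X, ‖v‖ ≤ 1 → h v < u := by
    intro v hv
    have hmem : StrongDual.toWeakDual (inclusionInDoubleDual ℝ X v) ∈ closure S :=
      subset_closure ⟨_, ⟨v, by simpa [Metric.mem_closedBall, dist_zero_right] using hv, rfl⟩, rfl⟩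
    have := hFu _ hmem
    rwa [hF, show (StrongDual.toWeakDual (inclusionInDoubleDual ℝ X v)) h = h v from rfl] at this
  have hu0 : 0 < u := by
    have := hvu 0 (by simp)
    simpa using this
  have hnorm : ‖h‖ ≤ u := by
    apply ContinuousLinearMap.opNorm_le_bound _ hu0.le
    intro v
    rcases eq_or_ne v 0 with rfl | hv0
    · simp
    · have hnv : (0:ℝ) < ‖v‖ := norm_pos_iff.2 hv0
      set w := (‖v‖)⁻¹ • v with hw
      have hw1 : ‖w‖ ≤ 1 := by
        rw [hw, norm_smul, norm_inv, norm_norm, inv_mul_cancel₀ hnv.ne']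
      have hp := hvu w hw1
      have hm := hvu (-w) (by rwa [norm_neg])
      rw [map_neg] at hm
      have habs : ‖h w‖ ≤ u := by
        rw [Real.norm_eq_abs, abs_le]
        constructor <;> linarith
      have hvw : v = ‖v‖ • w := by
        rw [hw, smul_smul, mul_inv_cancel₀ hnv.ne', one_smul]
      calc ‖h v‖ = ‖h (‖v‖ • w)‖ := by rw [← hvw]
      _ = ‖v‖ * ‖h w‖ := by rw [map_smul, norm_smul, norm_norm]
      _ ≤ ‖v‖ * u := by gcongr
      _ = u * ‖v‖ := mul_comm _ _
  have h1 : u < Φ h := by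
    have := hΦu
    exact this.trans_eq (hF _)
  have h2 : Φ h ≤ u :=
    calc Φ h ≤ ‖Φ h‖ := le_abs_self _
    _ ≤ ‖Φ‖ * ‖h‖ := Φ.le_opNorm h
    _ ≤ 1 * u := mul_le_mul hΦ hnorm (norm_nonneg h) zero_le_one
    _ = u := one_mul u
  linarith

/-- the canonical map `j : X → V*` for a subspace `V` of the dual,
`⟨j v, x*⟩ = x*(v)`. -/
def jfun {X : Type*} [NormedAddCommGroup X] [NormedSpace ℝ X]
    (V : Submodule ℝ (StrongDual ℝ X)) (v : X) : ↥V →L[ℝ] ℝ :=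
  (inclusionInDoubleDual ℝ X v).comp V.subtypeL

/-- the space `ℓ₁` of absolutely summable real sequences. -/
abbrev ell1 : Type := lp (fun _ : ℕ => ℝ) 1

/-- the space `c₀` of real sequences converging to zero, with the sup norm. -/
abbrev czero : Type := ZeroAtInftyContinuousMap ℕ ℝ

end

set_option maxHeartbeats 1000000 in
/-- Theorem 5.1(1): `bc₃((xₙ)) ≤ 2K²·wk_X(B_X)`. -/
theorem bc3_le_wk {X : Type*} [NormedAddCommGroup X] [NormedSpace ℝ X]
    [CompleteSpace X] (hinf : ¬ FiniteDimensional ℝ X)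
    (x : ℕ → X) (f : ℕ → X →L[ℝ] ℝ) (hb : IsSchauderBasis x f)
    (K : ℝ) (hK : K = ⨆ n : ℕ, ‖basisProj x f n‖) :
    bc3 x f ≤ 2 * K ^ 2 * wk X (Metric.closedBall (0 : X) 1) := by
  -- notation
  have hPapp : ∀ (n : ℕ) (v : X), basisProj x f n v = ∑ i ∈ Finset.range n, f i v • x i := by
    intro n v
    simp [basisProj, ContinuousLinearMap.sum_apply, ContinuousLinearMap.smulRight_apply]
  -- uniform boundedness
  have hptw : ∀ v : X, ∃ C, ∀ n, ‖basisProj x f n v‖ ≤ C := by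
    intro v
    have h1 : Tendsto (fun n => basisProj x f n v) atTop (𝓝 v) := by
      simpa [hPapp] using hb.expand v
    obtain ⟨C, hC⟩ := h1.norm.bddAbove_range
    exact ⟨C, fun n => hC ⟨n, rfl⟩⟩
  have hbdd : BddAbove (Set.range fun n => ‖basisProj x f n‖) := by
    obtain ⟨C', hC'⟩ := banach_steinhaus (g := fun n => basisProj x f n) hptw
    exact ⟨C', by rintro d ⟨n, rfl⟩; exact hC' n⟩
  have hKle : ∀ n, ‖basisProj x f n‖ ≤ K := by
    intro n; rw [hK]; exact le_ciSup hbdd n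
  have hK1 : 1 ≤ K := by
    have hf0 : f 0 (x 0) = 1 := by
      have hten : Tendsto (fun n => ∑ i ∈ Finset.range n,
          (if i = 0 then (1:ℝ) else 0) • x i) atTop (𝓝 (x 0)) := by
        apply tendsto_atTop_of_eventually_const (i₀ := 1)
        intro n hn
        have : ∀ i ∈ Finset.range n, (if i = 0 then (1:ℝ) else 0) • x i
            = if i = 0 then x i else 0 := by
          intro i _; split <;> simp
        rw [Finset.sum_congr rfl this, Finset.sum_ite_eq' (Finset.range n) 0 x,
          if_pos (Finset.mem_range.2 (by omega))]
      have := hb.unique (fun i => if i = 0 then (1:ℝ) else 0) (x 0) hten 0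
      simpa using this.symm
    have hx0 : x 0 ≠ 0 := by
      intro h
      rw [h, map_zero] at hf0
      exact one_ne_zero hf0.symm
    have hP1 : basisProj x f 1 (x 0) = x 0 := by
      rw [hPapp]; simp [hf0]
    have hle : ‖x 0‖ ≤ ‖basisProj x f 1‖ * ‖x 0‖ := by
      conv_lhs => rw [← hP1]
      exact (basisProj x f 1).le_opNorm (x 0)
    have h1 : 1 ≤ ‖basisProj x f 1‖ := by
      have hx0' : 0 < ‖x 0‖ := norm_pos_iff.2 hx0
      nlinarith
    exact h1.trans (hKle 1)
  have hK0 : (0:ℝ) ≤ K := zero_le_one.trans hK1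
  set j := inclusionInDoubleDual ℝ X with hj
  set w := wk X (Metric.closedBall (0:X) 1) with hwdef
  have hw0 : 0 ≤ w := by
    rw [hwdef, wk, hdist]
    apply Real.sSup_nonneg
    rintro d ⟨a, -, rfl⟩
    exact infDist_nonneg
  rw [bc3]
  apply Real.sSup_le
  · rintro c ⟨Φ, hΦ, rfl⟩
    set z : ℕ → X := fun n => ∑ i ∈ Finset.range n, Φ (f i) • x i with hz
    have hΦdist : infDist Φ (Set.range j) ≤ w := by
      rw [hwdef, wk, hdist]
      apply le_csSup
      · refine ⟨1, ?_⟩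
        rintro d ⟨a, ha, rfl⟩
        calc infDist a (Set.range j) ≤ dist a (j 0) := infDist_le_dist_of_mem ⟨0, rfl⟩
        _ = ‖a‖ := by rw [map_zero]; exact dist_zero_right a
        _ ≤ 1 := norm_le_one_of_mem_wstar a ha
      · exact ⟨Φ, goldstine Φ hΦ, rfl⟩
    have h2K : ca z ≤ 2 * K * w := by
      apply le_of_forall_pos_le_add
      intro ε hε
      set δ := ε / (2*K+2) with hδdef
      have h2K2 : (0:ℝ) < 2*K+2 := by linarith
      have hδ : 0 < δ := div_pos hε h2K2
      have hlt : infDist Φ (Set.range j) < w + δ := lt_of_le_of_lt hΦdist (by linarith)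
      have hne : (Set.range (⇑j)).Nonempty := ⟨j 0, ⟨0, rfl⟩⟩
      obtain ⟨y, ⟨v, rfl⟩, hyv⟩ := (infDist_lt_iff hne).1 hlt
      have hdist2 : ‖Φ - j v‖ < w + δ := lt_of_eq_of_lt (dist_eq_norm Φ (j v)).symm hyv
      -- the key estimate
      have hzP : ∀ n, ‖z n - basisProj x f n v‖ ≤ K * (w + δ) := by
        intro n
        apply norm_le_dual_bound ℝ _ (by positivity)
        intro h
        have hcomp : h.comp (basisProj x f n) = ∑ i ∈ Finset.range n, h (x i) • f i := by
          ext v'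
          simp [hPapp, map_sum, map_smul, ContinuousLinearMap.sum_apply, mul_comm]
        have e1 : h (z n) = ∑ i ∈ Finset.range n, Φ (f i) * h (x i) := by
          rw [hz]
          simp [map_sum, map_smul, smul_eq_mul]
        have e2 : Φ (∑ i ∈ Finset.range n, h (x i) • f i)
            = ∑ i ∈ Finset.range n, Φ (f i) * h (x i) := by
          rw [map_sum]
          simp [map_smul, smul_eq_mul, mul_comm]
        have e3 : (j v) (∑ i ∈ Finset.range n, h (x i) • f i) = h (basisProj x f n v) := by
          rw [← hcomp, hj, dual_def]
          rfl
        have heval : h (z n - basisProj x f n v) = (Φ - j v) (h.comp (basisProj x f n)) := by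
          rw [map_sub, ContinuousLinearMap.sub_apply, hcomp, e1, e2, e3]
        rw [heval]
        calc ‖(Φ - j v) (h.comp (basisProj x f n))‖
            ≤ ‖Φ - j v‖ * ‖h.comp (basisProj x f n)‖ := (Φ - j v).le_opNorm _
        _ ≤ ‖Φ - j v‖ * (‖h‖ * ‖basisProj x f n‖) := by
            apply mul_le_mul_of_nonneg_left ?_ (norm_nonneg (Φ - j v))
            exact (ContinuousLinearMap.opNorm_comp_le _ _)
        _ ≤ (w + δ) * (‖h‖ * K) := by
            apply mul_le_mul hdist2.le ?_ (by positivity) (by positivity)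
            exact mul_le_mul_of_nonneg_left (hKle n) (norm_nonneg h)
        _ = K * (w + δ) * ‖h‖ := by ring
      have hcauchy : CauchySeq (fun n => basisProj x f n v) := by
        have h1 : Tendsto (fun n => basisProj x f n v) atTop (𝓝 v) := by
          simpa [hPapp] using hb.expand v
        exact h1.cauchySeq
      obtain ⟨N, hN⟩ := Metric.cauchySeq_iff.1 hcauchy δ hδ
      have hca : ca z ≤ sSup {d : ℝ | ∃ k, N ≤ k ∧ ∃ l, N ≤ l ∧ d = ‖z k - z l‖} := by
        rw [ca]
        apply ciInf_le
        refine ⟨0, ?_⟩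
        rintro d ⟨n, rfl⟩
        apply Real.sSup_nonneg
        rintro d ⟨k, hk, l, hl, rfl⟩
        exact norm_nonneg _
      refine hca.trans ?_
      have hδε : (2*K+1) * δ ≤ ε := by
        have heq : (2*K+2) * δ = ε := by
          rw [hδdef]; field_simp
        nlinarith
      apply Real.sSup_le
      · rintro d ⟨k, hk, l, hl, rfl⟩
        have h1 := hzP k
        have h2 := hzP l
        have h3 : dist (basisProj x f k v) (basisProj x f l v) < δ := hN k hk l hl
        rw [dist_eq_norm] at h3
        have hsplit : z k - z l = (z k - basisProj x f k v)
            + (basisProj x f k v - basisProj x f l v) - (z l - basisProj x f l v) := by abel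
        calc ‖z k - z l‖ ≤ ‖(z k - basisProj x f k v)
              + (basisProj x f k v - basisProj x f l v)‖ + ‖z l - basisProj x f l v‖ := by
              rw [hsplit]; exact norm_sub_le _ _
        _ ≤ ‖z k - basisProj x f k v‖ + ‖basisProj x f k v - basisProj x f l v‖
              + ‖z l - basisProj x f l v‖ := by
              have := norm_add_le (z k - basisProj x f k v)
                (basisProj x f k v - basisProj x f l v)
              linarith
        _ ≤ K * (w + δ) + δ + K * (w + δ) := by linarith
        _ = 2 * K * w + (2*K+1) * δ := by ring
        _ ≤ 2 * K * w + ε := by linarith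
      · nlinarith
    calc ca z ≤ 2 * K * w := h2K
    _ ≤ 2 * K ^ 2 * w := by nlinarith [mul_nonneg (mul_nonneg hK0 (sub_nonneg.2 hK1)) hw0]
  · nlinarith
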